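/- For 3 items and agents with incomes a > b > c > all other incomes and a < b + c, the pixep ABC with prices a, b, c implements a competitive equilibrium: the allocation where Alice picks her favorite item, Bob picks his favorite remaining item, and Carl gets the last item, with prices a, b, c respectively, is a competitive equilibrium for all strict monotone preferences. -/

import Mathlib

open Finset

/-- `r A B` means bundle `A` is strictly preferred to bundle `B`.
The preference is transitive, asymmetric, total (strict) and monotone. -/
def StrictMonoPref {m : ℕ} (r : Finset (Fin m) → Finset (Fin m) → Prop) : Prop :=
  (∀ A B C, r A B → r B C → r A C) ∧
  (∀ A B, r A B → ¬ r B A) ∧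
  (∀ A B : Finset (Fin m), A ≠ B → r A B ∨ r B A) ∧
  (∀ A B : Finset (Fin m), A ⊂ B → r B A)

/-- Competitive equilibrium: positive prices, the bundles partition all items,
every agent with a non-empty bundle pays exactly their income, and every agent
either strictly prefers their own bundle to, or cannot afford, any other bundle. -/
def IsCE {m n : ℕ} (t : Fin n → ℝ)
    (pref : Fin n → Finset (Fin m) → Finset (Fin m) → Prop)
    (p : Fin m → ℝ) (X : Fin n → Finset (Fin m)) : Prop :=
  (∀ k, 0 < p k) ∧
  (∀ i j, i ≠ j → Disjoint (X i) (X j)) ∧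
  (Finset.univ.biUnion X = Finset.univ) ∧
  (∀ i, X i ≠ ∅ → ∑ k ∈ X i, p k = t i) ∧
  (∀ i (Y : Finset (Fin m)), Y ≠ X i → pref i (X i) Y ∨ t i < ∑ k ∈ Y, p k)

/-- **Pixep ABC with three items.** Incomes: `t 0 = a > t 1 = b > t 2 = c` are
the three largest incomes, all positive, and `a < b + c`.  If Alice (agent 0)
picks her favourite item `iA`, Bob (agent 1) his favourite remaining item `iB`,
and Carl (agent 2) gets the last item `iC`, then this allocation with prices
`a, b, c` is a competitive equilibrium, for all strict monotone preferences. -/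
theorem pixep_ABC_implements_CE (n : ℕ) (t : Fin (n + 3) → ℝ)
    (hpos : ∀ i, 0 < t i)
    (hab : t 0 > t 1) (hbc : t 1 > t 2)
    (hrest : ∀ i, i ≠ 0 → i ≠ 1 → i ≠ 2 → t i < t 2)
    (hsum : t 0 < t 1 + t 2)
    (pref : Fin (n + 3) → Finset (Fin 3) → Finset (Fin 3) → Prop)
    (hpref : ∀ i, StrictMonoPref (pref i))
    (iA iB iC : Fin 3)
    (hdistinct : ({iA, iB, iC} : Finset (Fin 3)) = Finset.univ)
    -- Alice picks her favourite item
    (hAfav : ∀ j : Fin 3, j ≠ iA → pref 0 {iA} {j})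
    -- Bob picks his favourite remaining item
    (hBfav : pref 1 {iB} {iC}) :
    IsCE t pref
      (fun k => if k = iA then t 0 else if k = iB then t 1 else t 2)
      (fun i => if i = 0 then {iA} else if i = 1 then {iB}
        else if i = 2 then {iC} else ∅) := by
  obtain ⟨hABd, hACd, hBCd⟩ : iA ≠ iB ∧ iA ≠ iC ∧ iB ≠ iC := by
    fin_cases iA <;> fin_cases iB <;> fin_cases iC <;> revert hdistinct <;> decide
  have hBA : iB ≠ iA := hABd.symm
  have hCA : iC ≠ iA := hACd.symm
  have hCB : iC ≠ iB := hBCd.symm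
  have hmem : ∀ j : Fin 3, j = iA ∨ j = iB ∨ j = iC := fun j => by
    have : j ∈ ({iA, iB, iC} : Finset (Fin 3)) := hdistinct ▸ Finset.mem_univ j
    simpa using this
  have h10 : (1 : Fin (n + 3)) ≠ 0 := by simp
  have h20 : (2 : Fin (n + 3)) ≠ 0 := by simp [Fin.ext_iff, Fin.val_two, Nat.mod_eq_of_lt (show 2 < n + 3 by omega)]
  have h21 : (2 : Fin (n + 3)) ≠ 1 := by simp [Fin.ext_iff, Fin.val_two, Nat.mod_eq_of_lt (show 2 < n + 3 by omega)]
  set p : Fin 3 → ℝ := fun k => if k = iA then t 0 else if k = iB then t 1 else t 2 with hp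
  set X : Fin (n + 3) → Finset (Fin 3) := fun i => if i = 0 then {iA} else if i = 1 then {iB}
    else if i = 2 then {iC} else ∅ with hX
  have pA : p iA = t 0 := by simp [hp]
  have pB : p iB = t 1 := by simp [hp, hBA]
  have pC : p iC = t 2 := by simp [hp, hCA, hCB]
  have sA : ∑ k ∈ ({iA} : Finset (Fin 3)), p k = t 0 := by simp [pA]
  have sB : ∑ k ∈ ({iB} : Finset (Fin 3)), p k = t 1 := by simp [pB]
  have sC : ∑ k ∈ ({iC} : Finset (Fin 3)), p k = t 2 := by simp [pC]
  have sAB : ∑ k ∈ ({iA, iB} : Finset (Fin 3)), p k = t 0 + t 1 := by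
    rw [Finset.sum_pair hABd, pA, pB]
  have sAC : ∑ k ∈ ({iA, iC} : Finset (Fin 3)), p k = t 0 + t 2 := by
    rw [Finset.sum_pair hACd, pA, pC]
  have sBC : ∑ k ∈ ({iB, iC} : Finset (Fin 3)), p k = t 1 + t 2 := by
    rw [Finset.sum_pair hBCd, pB, pC]
  have sABC : ∑ k ∈ ({iA, iB, iC} : Finset (Fin 3)), p k = t 0 + t 1 + t 2 := by
    rw [Finset.sum_insert (by simp [hABd, hACd]), Finset.sum_pair hBCd, pA, pB, pC]; ring
  have hYcases : ∀ Y : Finset (Fin 3), Y = ∅ ∨ Y = {iA} ∨ Y = {iB} ∨ Y = {iC} ∨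
      Y = {iA, iB} ∨ Y = {iA, iC} ∨ Y = {iB, iC} ∨ Y = {iA, iB, iC} := by
    intro Y
    by_cases hA : iA ∈ Y <;> by_cases hB : iB ∈ Y <;> by_cases hC : iC ∈ Y
    · have : Y = {iA, iB, iC} := by ext x; rcases hmem x with rfl | rfl | rfl <;> simp [hA, hB, hC, hABd, hACd, hBCd, hBA, hCA, hCB]
      exact .inr (.inr (.inr (.inr (.inr (.inr (.inr this))))))
    · have : Y = {iA, iB} := by ext x; rcases hmem x with rfl | rfl | rfl <;> simp [hA, hB, hC, hABd, hACd, hBCd, hBA, hCA, hCB]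
      exact .inr (.inr (.inr (.inr (.inl this))))
    · have : Y = {iA, iC} := by ext x; rcases hmem x with rfl | rfl | rfl <;> simp [hA, hB, hC, hABd, hACd, hBCd, hBA, hCA, hCB]
      exact .inr (.inr (.inr (.inr (.inr (.inl this)))))
    · have : Y = {iA} := by ext x; rcases hmem x with rfl | rfl | rfl <;> simp [hA, hB, hC, hABd, hACd, hBCd, hBA, hCA, hCB]
      exact .inr (.inl this)
    · have : Y = {iB, iC} := by ext x; rcases hmem x with rfl | rfl | rfl <;> simp [hA, hB, hC, hABd, hACd, hBCd, hBA, hCA, hCB]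
      exact .inr (.inr (.inr (.inr (.inr (.inr (.inl this))))))
    · have : Y = {iB} := by ext x; rcases hmem x with rfl | rfl | rfl <;> simp [hA, hB, hC, hABd, hACd, hBCd, hBA, hCA, hCB]
      exact .inr (.inr (.inl this))
    · have : Y = {iC} := by ext x; rcases hmem x with rfl | rfl | rfl <;> simp [hA, hB, hC, hABd, hACd, hBCd, hBA, hCA, hCB]
      exact .inr (.inr (.inr (.inl this)))
    · have : Y = ∅ := by ext x; rcases hmem x with rfl | rfl | rfl <;> simp [hA, hB, hC, hABd, hACd, hBCd, hBA, hCA, hCB]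
      exact .inl this
  refine ⟨?_, ?_, ?_, ?_, ?_⟩
  · intro k; simp only [hp]; split_ifs <;> apply hpos
  · intro i j hij; simp only [hX]
    split_ifs <;>
      simp_all [Finset.disjoint_singleton_left, Finset.disjoint_singleton_right]
  · ext x
    simp only [Finset.mem_biUnion, Finset.mem_univ, iff_true, true_and]
    rcases hmem x with rfl | rfl | rfl
    · exact ⟨0, by simp [hX]⟩
    · exact ⟨1, by simp [hX, h10]⟩
    · exact ⟨2, by simp [hX, h20, h21]⟩
  · intro i hi
    simp only [hX] at hi ⊢
    split_ifs at hi ⊢ with h0 h1 h2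
    · subst h0; exact sA
    · subst h1; exact sB
    · subst h2; exact sC
    · exact absurd rfl hi
  · intro i Y hY
    simp only [hX] at hY ⊢
    by_cases h0 : i = 0
    · subst h0
      rw [if_pos rfl] at hY ⊢
      rcases hYcases Y with rfl | rfl | rfl | rfl | rfl | rfl | rfl | rfl
      · exact Or.inl ((hpref 0).2.2.2 _ _ (by simp))
      · exact absurd rfl hY
      · exact Or.inl (hAfav iB hBA)
      · exact Or.inl (hAfav iC hCA)
      · right; rw [sAB]; linarith [hpos 1]
      · right; rw [sAC]; linarith [hpos 2]
      · right; rw [sBC]; linarith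
      · right; rw [sABC]; linarith [hpos 2]
    by_cases h1 : i = 1
    · subst h1
      rw [if_neg h10, if_pos rfl] at hY ⊢
      rcases hYcases Y with rfl | rfl | rfl | rfl | rfl | rfl | rfl | rfl
      · exact Or.inl ((hpref 1).2.2.2 _ _ (by simp))
      · right; rw [sA]; exact hab
      · exact absurd rfl hY
      · exact Or.inl hBfav
      · right; rw [sAB]; linarith
      · right; rw [sAC]; linarith [hpos 2]
      · right; rw [sBC]; linarith [hpos 2]
      · right; rw [sABC]; linarith [hpos 2]
    by_cases h2 : i = 2
    · subst h2
      rw [if_neg h20, if_neg h21, if_pos rfl] at hY ⊢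
      rcases hYcases Y with rfl | rfl | rfl | rfl | rfl | rfl | rfl | rfl
      · exact Or.inl ((hpref 2).2.2.2 _ _ (by simp))
      · right; rw [sA]; linarith
      · right; rw [sB]; exact hbc
      · exact absurd rfl hY
      · right; rw [sAB]; linarith [hpos 0]
      · right; rw [sAC]; linarith [hpos 0]
      · right; rw [sBC]; linarith [hpos 1]
      · right; rw [sABC]; linarith [hpos 0, hpos 1]
    · rw [if_neg h0, if_neg h1, if_neg h2] at hY ⊢
      have hti := hrest i h0 h1 h2
      right
      rcases hYcases Y with rfl | rfl | rfl | rfl | rfl | rfl | rfl | rfl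
      · exact absurd rfl hY
      · rw [sA]; linarith
      · rw [sB]; linarith
      · rw [sC]; linarith
      · rw [sAB]; linarith
      · rw [sAC]; linarith
      · rw [sBC]; linarith
      · rw [sABC]; linarith
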